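/- Every direct summand of a si-simple abelian group is si-simple: if G is si-simple and G is the internal direct sum A ⊕ B of subgroups A and B, then A is si-simple. -/

import Mathlib

/-- A subgroup `S` of an abelian group `G` is *strongly invariant* if every additive
homomorphism `ψ : S →+ G` maps `S` into itself. -/
def IsStronglyInvariant {G : Type*} [AddCommGroup G] (S : AddSubgroup G) : Prop :=
  ∀ (ψ : S →+ G) (s : S), (ψ s : G) ∈ S

/-- A subgroup `F` of `G` is *fully invariant* if every endomorphism of `G` maps `F` into
itself. -/
def IsFullyInvariant {G : Type*} [AddCommGroup G] (F : AddSubgroup G) : Prop :=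
  ∀ (φ : G →+ G), ∀ x ∈ F, φ x ∈ F

/-- A group is *si-simple* if its only strongly invariant subgroups are `⊥` and `⊤`. -/
def SiSimple (G : Type*) [AddCommGroup G] : Prop :=
  ∀ S : AddSubgroup G, IsStronglyInvariant S → S = ⊥ ∨ S = ⊤

/-- A non-zero group `G` is an *ISI-group* if all of its strongly invariant subgroups
different from `⊥` and `⊤` (if any) are isomorphic to one another. -/
def IsISI (G : Type*) [AddCommGroup G] : Prop :=
  Nontrivial G ∧ ∀ H F : AddSubgroup G, IsStronglyInvariant H → IsStronglyInvariant F →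
    H ≠ ⊥ → H ≠ ⊤ → F ≠ ⊥ → F ≠ ⊤ → Nonempty (H ≃+ F)

/-- A non-zero group `G` is a *strongly ISI-group* if all of its non-zero strongly invariant
subgroups are isomorphic to one another. -/
def IsStronglyISI (G : Type*) [AddCommGroup G] : Prop :=
  Nontrivial G ∧ ∀ H F : AddSubgroup G, IsStronglyInvariant H → IsStronglyInvariant F →
    H ≠ ⊥ → F ≠ ⊥ → Nonempty (H ≃+ F)

/-- A non-zero group `G` is an *IFI-group* if all of its fully invariant subgroups
different from `⊥` and `⊤` (if any) are isomorphic to one another. -/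
def IsIFI (G : Type*) [AddCommGroup G] : Prop :=
  Nontrivial G ∧ ∀ H F : AddSubgroup G, IsFullyInvariant H → IsFullyInvariant F →
    H ≠ ⊥ → H ≠ ⊤ → F ≠ ⊥ → F ≠ ⊤ → Nonempty (H ≃+ F)

/-- Multiplication by a natural number `n`, as an endomorphism of `G`. -/
def nsmulHom {G : Type*} [AddCommGroup G] (n : ℕ) : G →+ G where
  toFun x := n • x
  map_zero' := smul_zero n
  map_add' a b := smul_add n a b

/-- `H` is `n`-pure in `G` if `H ∩ nG = nH`. -/
def IsNPure {G : Type*} [AddCommGroup G] (n : ℕ) (H : AddSubgroup G) : Prop :=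
  H ⊓ (nsmulHom (G := G) n).range = H.map (nsmulHom n)

/-- `H` is a pure subgroup of `G` if `H ∩ nG = nH` for every positive natural number `n`. -/
def IsPureSubgroup {G : Type*} [AddCommGroup G] (H : AddSubgroup G) : Prop :=
  ∀ n : ℕ, 0 < n → IsNPure n H

/-- A torsion-free group is *s-irreducible* if it has no pure strongly invariant subgroups
other than `⊥` and `⊤`. -/
def SIrreducible (G : Type*) [AddCommGroup G] : Prop :=
  ∀ H : AddSubgroup G, IsPureSubgroup H → IsStronglyInvariant H → H = ⊥ ∨ H = ⊤

/-- `Hom(F,G)F = ∑_{φ ∈ Hom(F,G)} φ(F)`, the subgroup generated by all images of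
homomorphisms from `F` to `G`. -/
def homGenSub {G : Type*} [AddCommGroup G] (F : AddSubgroup G) : AddSubgroup G :=
  ⨆ φ : F →+ G, φ.range

/-- A group is divisible if `nD = D` for every positive natural number `n`. -/
def IsDivisibleGroup (G : Type*) [AddCommGroup G] : Prop :=
  ∀ n : ℕ, 0 < n → ∀ x : G, ∃ y : G, n • y = x

/-- A direct summand of a si-simple abelian group is si-simple. -/
theorem statement11 {G : Type*} [AddCommGroup G] (hsimple : SiSimple G)
    (A B : AddSubgroup G) (hcompl : IsCompl A B) :
    SiSimple A := by
  intro S hS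
  -- projection onto A
  have hcompl' : IsCompl (AddSubgroup.toIntSubmodule A) (AddSubgroup.toIntSubmodule B) :=
    (AddSubgroup.toIntSubmodule).isCompl_iff.1 hcompl
  let π0 := Submodule.linearProjOfIsCompl _ _ hcompl'
  let π : G →+ A :=
    { toFun := fun x => ⟨(π0 x : G), (π0 x).2⟩
      map_zero' := by ext; simp
      map_add' := fun a b => by ext; simp }
  have hπ : ∀ a : A, π (a : G) = a := by
    intro a
    have : π0 (a : G) = ⟨(a : G), a.2⟩ :=
      Submodule.linearProjOfIsCompl_apply_left hcompl' ⟨(a:G), a.2⟩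
    ext
    simp [π, this]
  -- the big subgroup
  set T : AddSubgroup G := ⨆ φ : S →+ G, φ.range with hT
  have hrange : ∀ φ : S →+ G, φ.range ≤ T := fun φ => le_iSup (fun φ : S →+ G => φ.range) φ
  have hTsi : IsStronglyInvariant T := by
    intro ψ t
    obtain ⟨x, hx⟩ := t
    induction hx using AddSubgroup.iSup_induction' with
    | hp φ x hx =>
      obtain ⟨s, rfl⟩ := hx
      exact hrange (ψ.comp (φ.codRestrict T (fun s => hrange φ ⟨s, rfl⟩))) ⟨s, rfl⟩
    | h1 =>
      have h0 : ψ (0 : T) ∈ T := by rw [map_zero]; exact T.zero_mem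
      exact h0
    | hadd x y hx hy ihx ihy =>
      have : (⟨x + y, AddSubgroup.add_mem T hx hy⟩ : T) = ⟨x, hx⟩ + ⟨y, hy⟩ := rfl
      rw [this, map_add]
      exact T.add_mem ihx ihy
  rcases hsimple T hTsi with h | h
  · left
    ext s
    simp only [AddSubgroup.mem_bot]
    constructor
    · intro hs
      have : (A.subtype.comp S.subtype) ⟨s, hs⟩ ∈ T :=
        hrange _ ⟨⟨s, hs⟩, rfl⟩
      rw [h, AddSubgroup.mem_bot] at this
      exact Subtype.ext this
    · rintro rfl; exact S.zero_mem
  · right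
    ext a
    simp only [AddSubgroup.mem_top, iff_true]
    -- a.1 ∈ T = ⊤; show π of anything in T lies in S
    have key : ∀ x, x ∈ T → π x ∈ S := by
      intro x hx
      induction hx using AddSubgroup.iSup_induction' with
      | hp φ x hx =>
        obtain ⟨s, rfl⟩ := hx
        exact hS (π.comp φ) s
      | h1 => simpa using S.zero_mem
      | hadd x y hx hy ihx ihy => rw [map_add]; exact S.add_mem ihx ihy
    have : π (a : G) ∈ S := key _ (h ▸ AddSubgroup.mem_top _)
    rwa [hπ a] at this
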